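/- Let k be a perfect field of characteristic p > 0 and n, m coprime non-negative integers with h = n + m ≥ 1. Let Z = ⊕_{j∈ℤ} Z^j be a graded 1-truncated Dieudonné module of type (n,m) over k with dim_k Z = h. Then the set C_Z := {j ∈ ℤ : Z^j ≠ 0} is a beginning of a semi-module of type (n,m), and each nonzero graded piece Z^j is one-dimensional. -/

import Mathlib

open Module

/-- A graded 1-truncated Dieudonné module of type `(n,m)` over a perfect field `k`
of characteristic `p`: a finite-dimensional ℤ-graded `k`-vector space with a
Frobenius-semilinear endomorphism `F` of degree `n` and an inverse-Frobenius-semilinear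
endomorphism `Vo` of degree `m` satisfying `Im F = ker Vo` and `Im Vo = ker F`. -/
structure GradedTDM (k : Type) [Field k] (p : ℕ) [ExpChar k p] [PerfectRing k p]
    (n m : ℕ) where
  Vsp : Type
  [instAdd : AddCommGroup Vsp]
  [instMod : Module k Vsp]
  [instFin : FiniteDimensional k Vsp]
  grading : ℤ → Submodule k Vsp
  internal : DirectSum.IsInternal grading
  F : Vsp → Vsp
  Vo : Vsp → Vsp
  F_add : ∀ x y, F (x + y) = F x + F y
  F_smul : ∀ (a : k) (x), F (a • x) = a ^ p • F x
  Vo_add : ∀ x y, Vo (x + y) = Vo x + Vo y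
  Vo_smul : ∀ (a : k) (x), Vo (a • x) = (frobeniusEquiv k p).symm a • Vo x
  F_deg : ∀ j : ℤ, ∀ x ∈ grading j, F x ∈ grading (j + n)
  Vo_deg : ∀ j : ℤ, ∀ x ∈ grading j, Vo x ∈ grading (j + m)
  range_F : Set.range F = {x | Vo x = 0}
  range_Vo : Set.range Vo = {x | F x = 0}

attribute [instance] GradedTDM.instAdd GradedTDM.instMod GradedTDM.instFin


/-- `C` is a beginning of a semi-module of type `(n,m)`. -/
def IsBeginning (n m : ℕ) (C : Set ℤ) : Prop :=
  (∀ i : ℤ, ∃! j : ℤ, j ∈ C ∧ ((n : ℤ) + m) ∣ (j - i)) ∧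
  ∀ i ∈ C, i + n ∈ C ∨ i - m ∈ C

section Aux

variable {k : Type} [Field k] {p : ℕ} [ExpChar k p] [PerfectRing k p] {n m : ℕ}
  (Z : GradedTDM k p n m)

/-- The linear equivalence coming from the internal direct sum decomposition. -/
noncomputable def GradedTDM.equivDS : (DirectSum ℤ fun j => Z.grading j) ≃ₗ[k] Z.Vsp :=
  LinearEquiv.ofBijective (DirectSum.coeLinearMap Z.grading) Z.internal

/-- Projection onto the `j`-th graded piece. -/
noncomputable def GradedTDM.proj (j : ℤ) (x : Z.Vsp) : Z.Vsp :=
  (Z.equivDS.symm x j : Z.Vsp)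

lemma GradedTDM.proj_mem (j : ℤ) (x : Z.Vsp) : Z.proj j x ∈ Z.grading j :=
  (Z.equivDS.symm x j).2

lemma GradedTDM.proj_add (j : ℤ) (x y : Z.Vsp) :
    Z.proj j (x + y) = Z.proj j x + Z.proj j y := by
  simp [GradedTDM.proj, map_add]

lemma GradedTDM.proj_zero (j : ℤ) : Z.proj j 0 = 0 := by
  simp [GradedTDM.proj]

lemma GradedTDM.proj_of_mem {j : ℤ} {x : Z.Vsp} (hx : x ∈ Z.grading j) :
    Z.proj j x = x := by
  unfold GradedTDM.proj GradedTDM.equivDS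
  rw [Z.internal.ofBijective_coeLinearMap_of_mem hx]

lemma GradedTDM.proj_of_mem_ne {i j : ℤ} {x : Z.Vsp} (hij : i ≠ j)
    (hx : x ∈ Z.grading i) : Z.proj j x = 0 := by
  unfold GradedTDM.proj GradedTDM.equivDS
  rw [Z.internal.ofBijective_coeLinearMap_of_mem_ne hij hx]
  rfl

set_option synthInstance.maxHeartbeats 1000000 in
lemma GradedTDM.exists_sum_proj (x : Z.Vsp) :
    ∃ s : Finset ℤ, (∀ i ∉ s, Z.proj i x = 0) ∧ x = ∑ i ∈ s, Z.proj i x := by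
  classical
  set d := Z.equivDS.symm x with hd
  refine ⟨d.support, ?_, ?_⟩
  · intro i hi
    have h0 : d i = 0 := DFinsupp.notMem_support_iff.mp hi
    show ((Z.equivDS.symm x) i : Z.Vsp) = 0
    rw [← hd, h0]
    rfl
  · conv_lhs => rw [← Z.equivDS.apply_symm_apply x, ← hd,
      ← DirectSum.sum_support_of d, map_sum]
    refine Finset.sum_congr rfl fun i _ => ?_
    show Z.equivDS (DirectSum.of _ i (d i)) = Z.proj i x
    unfold GradedTDM.equivDS
    change DirectSum.coeLinearMap Z.grading (DirectSum.of (fun j => Z.grading j) i (d i)) = Z.proj i x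
    rw [DirectSum.coeLinearMap_of]
    rfl

/-- Projection of the image of an additive degree-`d` map. -/
lemma GradedTDM.proj_map_shift (T : Z.Vsp → Z.Vsp)
    (hTadd : ∀ a b, T (a + b) = T a + T b) (d : ℕ)
    (hT : ∀ i : ℤ, ∀ x ∈ Z.grading i, T x ∈ Z.grading (i + d))
    (j : ℤ) (y : Z.Vsp) : Z.proj j (T y) = T (Z.proj (j - d) y) := by
  classical
  obtain ⟨s, hs0, hsum⟩ := Z.exists_sum_proj y
  set Th : Z.Vsp →+ Z.Vsp := AddMonoidHom.mk' T hTadd with hTh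
  have hT0 : T 0 = 0 := Th.map_zero
  set Ph : Z.Vsp →+ Z.Vsp := AddMonoidHom.mk' (Z.proj j) (Z.proj_add j) with hPh
  have hTy : T y = ∑ i ∈ s, T (Z.proj i y) := by
    conv_lhs => rw [hsum]
    exact map_sum Th (fun i => Z.proj i y) s
  have hproj : Z.proj j (T y) = ∑ i ∈ s, Z.proj j (T (Z.proj i y)) := by
    rw [hTy]
    exact map_sum Ph (fun i => T (Z.proj i y)) s
  rw [hproj]
  have hmem : ∀ i : ℤ, T (Z.proj i y) ∈ Z.grading (i + d) :=
    fun i => hT i _ (Z.proj_mem i y)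
  refine Finset.sum_eq_single (j - (d : ℤ)) (fun b hb hbne => ?_) (fun hns => ?_) |>.trans ?_
  · exact Z.proj_of_mem_ne (by omega) (hmem b)
  · rw [hs0 _ hns, hT0, Z.proj_zero]
  · have : T (Z.proj (j - (d : ℤ)) y) ∈ Z.grading j := by
      have := hmem (j - (d : ℤ))
      rwa [show j - (d : ℤ) + d = j by ring] at this
    exact Z.proj_of_mem this

lemma GradedTDM.step (j : ℤ) (hj : Z.grading j ≠ ⊥) :
    Z.grading (j + n) ≠ ⊥ ∨ Z.grading (j - m) ≠ ⊥ := by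
  by_contra hc
  push_neg at hc
  obtain ⟨h1, h2⟩ := hc
  obtain ⟨x, hx, hx0⟩ := (Submodule.ne_bot_iff _).mp hj
  have hFx : Z.F x ∈ Z.grading (j + n) := Z.F_deg j x hx
  rw [h1, Submodule.mem_bot] at hFx
  have hxr : x ∈ Set.range Z.Vo := by rw [Z.range_Vo]; exact hFx
  obtain ⟨y, hy⟩ := hxr
  have key : Z.proj j (Z.Vo y) = Z.Vo (Z.proj (j - m) y) :=
    Z.proj_map_shift Z.Vo Z.Vo_add m Z.Vo_deg j y
  have hp0 : Z.proj (j - m) y = 0 := by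
    have := Z.proj_mem (j - m) y
    rwa [h2, Submodule.mem_bot] at this
  have hVo0 : Z.Vo 0 = 0 := (AddMonoidHom.mk' Z.Vo Z.Vo_add).map_zero
  have : x = 0 := by
    rw [← Z.proj_of_mem hx, ← hy, key, hp0, hVo0]
  exact hx0 this

lemma GradedTDM.sum_finrank_le (T : Finset ℤ) :
    ∑ j ∈ T, finrank k (Z.grading j) ≤ finrank k Z.Vsp := by
  classical
  have key : ∀ T : Finset ℤ, ∑ j ∈ T, finrank k (Z.grading j)
      ≤ finrank k (T.sup Z.grading : Submodule k Z.Vsp) := by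
    intro T
    induction T using Finset.induction_on with
    | empty => simp
    | @insert a T ha ih =>
      rw [Finset.sum_insert ha, Finset.sup_insert]
      have hdisj : Disjoint (Z.grading a) (T.sup Z.grading) := by
        have hnot : a ∉ (T : Set ℤ) := by simpa using ha
        have := Z.internal.submodule_iSupIndep.disjoint_biSup hnot
        refine this.mono_right ?_
        rw [Finset.sup_eq_iSup]
        exact le_of_eq (by simp)
      have heq := Submodule.finrank_sup_add_finrank_inf_eq (Z.grading a)
        (T.sup Z.grading)
      rw [hdisj.eq_bot, finrank_bot, add_zero] at heq
      omega
  exact (key T).trans (Submodule.finrank_le _)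

end Aux

theorem stmt16 (k : Type) [Field k] (p : ℕ) [Fact p.Prime] [CharP k p]
    [ExpChar k p] [PerfectRing k p] (n m : ℕ) (hcop : Nat.Coprime n m)
    (h : ℕ) (hh : h = n + m) (hh1 : 1 ≤ h)
    (Z : GradedTDM k p n m) (hdim : Module.finrank k Z.Vsp = h) :
    IsBeginning n m {j : ℤ | Z.grading j ≠ ⊥} ∧
      ∀ j : ℤ, Z.grading j ≠ ⊥ → Module.finrank k (Z.grading j) = 1 := by
  classical
  haveI : NeZero h := ⟨by omega⟩
  -- the support is finite
  have hfinsub : Finite {i : ℤ // Z.grading i ≠ ⊥} := by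
    have hcard := Z.internal.submodule_iSupIndep.subtype_ne_bot_le_finrank_aux
    exact Cardinal.lt_aleph0_iff_finite.mp
      (lt_of_le_of_lt hcard (Cardinal.nat_lt_aleph0 _))
  have hfin : {j : ℤ | Z.grading j ≠ ⊥}.Finite := by
    rw [← Set.finite_coe_iff]; exact hfinsub
  set Cf : Finset ℤ := hfin.toFinset with hCf
  have hmemCf : ∀ j, j ∈ Cf ↔ Z.grading j ≠ ⊥ := by
    intro j; rw [hCf, Set.Finite.mem_toFinset]; rfl
  -- support is nonempty
  have hne : ∃ j0 : ℤ, Z.grading j0 ≠ ⊥ := by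
    by_contra hall
    push_neg at hall
    have htop := Z.internal.submodule_iSup_eq_top
    have htop' : (⊤ : Submodule k Z.Vsp) = ⊥ := by
      rw [← htop]; exact iSup_eq_bot.mpr hall
    have h0 : finrank k Z.Vsp = 0 := by
      rw [← finrank_top k Z.Vsp, htop', finrank_bot]
    omega
  obtain ⟨j0, hj0⟩ := hne
  -- coverage of all residue classes mod h
  have hstep' : ∀ j : ℤ, Z.grading j ≠ ⊥ → ∃ j' : ℤ, Z.grading j' ≠ ⊥ ∧
      ((j' : ZMod h) = (j : ZMod h) + (n : ZMod h)) := by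
    intro j hj
    have hm : ((m : ℕ) : ZMod h) = - ((n : ℕ) : ZMod h) := by
      have h0 : ((n + m : ℕ) : ZMod h) = 0 := by
        rw [← hh]; exact ZMod.natCast_self h
      push_cast at h0
      rw [eq_neg_iff_add_eq_zero, add_comm]
      exact h0
    rcases Z.step j hj with h1 | h2
    · exact ⟨j + n, h1, by push_cast; ring⟩
    · refine ⟨j - m, h2, ?_⟩
      push_cast
      rw [hm]; ring
  have hiter : ∀ t : ℕ, ∃ j : ℤ, Z.grading j ≠ ⊥ ∧
      (j : ZMod h) = (j0 : ZMod h) + (t : ZMod h) * (n : ZMod h) := by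
    intro t
    induction t with
    | zero => exact ⟨j0, hj0, by push_cast; ring⟩
    | succ t ih =>
      obtain ⟨j, hj, hje⟩ := ih
      obtain ⟨j', hj', hje'⟩ := hstep' j hj
      refine ⟨j', hj', ?_⟩
      rw [hje', hje]; push_cast; ring
  have hcop' : Nat.Coprime n h := by
    rw [hh]
    have : Nat.gcd n (n + m) = Nat.gcd n m := by
      rw [Nat.add_comm, Nat.gcd_add_self_right]
    unfold Nat.Coprime
    rw [this]
    exact hcop
  have hcov : ∀ r : ZMod h, ∃ j : ℤ, Z.grading j ≠ ⊥ ∧ (j : ZMod h) = r := by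
    intro r
    set u : (ZMod h)ˣ := ZMod.unitOfCoprime n hcop' with hu
    have hucoe : (u : ZMod h) = (n : ZMod h) := ZMod.coe_unitOfCoprime n hcop'
    set c : ZMod h := (r - (j0 : ZMod h)) * ((u⁻¹ : (ZMod h)ˣ) : ZMod h) with hc
    obtain ⟨j, hj, hje⟩ := hiter c.val
    refine ⟨j, hj, ?_⟩
    rw [hje]
    have hval : ((c.val : ℕ) : ZMod h) = c := ZMod.natCast_rightInverse c
    rw [hval, hc, hucoe.symm]
    have : ((u⁻¹ : (ZMod h)ˣ) : ZMod h) * (u : ZMod h) = 1 := u.inv_mul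
    calc (j0 : ZMod h) + (r - (j0 : ZMod h)) * ((u⁻¹ : (ZMod h)ˣ) : ZMod h) * (u : ZMod h)
        = (j0 : ZMod h) + (r - (j0 : ZMod h)) * (((u⁻¹ : (ZMod h)ˣ) : ZMod h) * (u : ZMod h)) := by
          ring
      _ = r := by rw [this]; ring
  -- counting
  have hpos : ∀ j ∈ Cf, 1 ≤ finrank k (Z.grading j) := by
    intro j hj
    have hz : finrank k (Z.grading j) ≠ 0 := fun h0 =>
      (hmemCf j).mp hj (Submodule.finrank_eq_zero.mp h0)
    omega
  have hsum : ∑ j ∈ Cf, finrank k (Z.grading j) ≤ h := by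
    rw [← hdim]; exact Z.sum_finrank_le Cf
  have hcard_le : Cf.card ≤ h := by
    calc Cf.card = ∑ _j ∈ Cf, 1 := by simp
      _ ≤ ∑ j ∈ Cf, finrank k (Z.grading j) := Finset.sum_le_sum hpos
      _ ≤ h := hsum
  have himg : Cf.image (fun j : ℤ => (j : ZMod h)) = Finset.univ := by
    apply Finset.eq_univ_iff_forall.mpr
    intro r
    obtain ⟨j, hj, hje⟩ := hcov r
    exact Finset.mem_image.mpr ⟨j, (hmemCf j).mpr hj, hje⟩
  have hcard_ge : h ≤ Cf.card := by
    calc h = Fintype.card (ZMod h) := (ZMod.card h).symm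
      _ = (Finset.univ : Finset (ZMod h)).card := rfl
      _ = (Cf.image (fun j : ℤ => (j : ZMod h))).card := by rw [himg]
      _ ≤ Cf.card := Finset.card_image_le
  have hcard : Cf.card = h := le_antisymm hcard_le hcard_ge
  have hinj : Set.InjOn (fun j : ℤ => (j : ZMod h)) Cf := by
    apply Finset.injOn_of_card_image_eq
    rw [himg]
    calc (Finset.univ : Finset (ZMod h)).card = Fintype.card (ZMod h) := rfl
      _ = h := ZMod.card h
      _ = Cf.card := hcard.symm
  have hone : ∀ j ∈ Cf, finrank k (Z.grading j) = 1 := by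
    have hs : (∑ _j ∈ Cf, 1) = ∑ j ∈ Cf, finrank k (Z.grading j) := by
      have h1 : (∑ _j ∈ Cf, (1 : ℕ)) = h := by simp [hcard]
      have h2 : (∑ _j ∈ Cf, (1 : ℕ)) ≤ ∑ j ∈ Cf, finrank k (Z.grading j) :=
        Finset.sum_le_sum hpos
      omega
    intro j hj
    exact ((Finset.sum_eq_sum_iff_of_le hpos).mp hs j hj).symm
  have hdvd_iff : ∀ i j : ℤ, (((n : ℤ) + m) ∣ (j - i)) ↔ (j : ZMod h) = (i : ZMod h) := by
    intro i j
    have hnm : ((n : ℤ) + m) = (h : ℤ) := by rw [hh]; push_cast; ring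
    rw [hnm, ← ZMod.intCast_zmod_eq_zero_iff_dvd]
    push_cast
    rw [sub_eq_zero]
  refine ⟨⟨?_, ?_⟩, ?_⟩
  · -- exactly one element in each residue class
    intro i
    obtain ⟨j, hj, hje⟩ := hcov ((i : ZMod h))
    refine ⟨j, ⟨hj, (hdvd_iff i j).mpr hje⟩, ?_⟩
    rintro j' ⟨hj', hdvd'⟩
    have hje' : (j' : ZMod h) = (i : ZMod h) := (hdvd_iff i j').mp hdvd'
    have hj'mem : j' ∈ Cf := (hmemCf j').mpr hj'
    have hjmem : j ∈ Cf := (hmemCf j).mpr hj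
    exact hinj hj'mem hjmem (by
      show ((j' : ℤ) : ZMod h) = ((j : ℤ) : ZMod h)
      rw [hje', hje])
  · -- the step condition
    intro i hi
    exact Z.step i hi
  · intro j hj
    exact hone j ((hmemCf j).mpr hj)
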